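/- Let λ₁, λ₂ be coprime positive integers with λ₁ ≡ λ₂ - 1 (mod 3) and S = {0, λ₁, λ₁+λ₂}. Then the set A = { iλ₁ : 1 ≤ i ≤ 2λ₁+λ₂, i ≡ 0 (mod 3) } + (2λ₁+λ₂)ℤ is S-packing and has density ⌊(1/3)(2λ₁+λ₂)⌋/(2λ₁+λ₂). Hence d_p(S) ≥ ⌊(1/3)(2λ₁+λ₂)⌋/(2λ₁+λ₂). -/

import Mathlib

open Filter Set

/-- The translateSet `S + t` of a set of integers. -/
def translateSet (S : Set ℤ) (t : ℤ) : Set ℤ := (· + t) '' S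

/-- Upper density of a set of integers. -/
noncomputable def upperDensity (A : Set ℤ) : ℝ :=
  Filter.limsup (fun n : ℕ => ((A ∩ Set.Icc (-(n : ℤ)) (n : ℤ)).ncard : ℝ) / (2 * n + 1)) Filter.atTop

/-- Lower density of a set of integers. -/
noncomputable def lowerDensity (A : Set ℤ) : ℝ :=
  Filter.liminf (fun n : ℕ => ((A ∩ Set.Icc (-(n : ℤ)) (n : ℤ)).ncard : ℝ) / (2 * n + 1)) Filter.atTop

/-- `A` is `S`-covering: every integer lies in some translateSet `S + a`, `a ∈ A`. -/
def SCovering (S A : Set ℤ) : Prop := ∀ t : ℤ, ∃ a ∈ A, t ∈ translateSet S a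

/-- `A` is `S`-blocking: `A` meets every translateSet of `S`. -/
def SBlocking (S A : Set ℤ) : Prop := ∀ t : ℤ, (A ∩ translateSet S t).Nonempty

/-- `A` is `S`-free: `A` contains no translateSet of `S`. -/
def SFree (S A : Set ℤ) : Prop := ∀ t : ℤ, ¬ translateSet S t ⊆ A

/-- `A` is `S`-packing: distinct translates `S + a₁`, `S + a₂` with `a₁, a₂ ∈ A` are disjoint. -/
def SPacking (S A : Set ℤ) : Prop :=
  ∀ a₁ ∈ A, ∀ a₂ ∈ A, a₁ ≠ a₂ → Disjoint (translateSet S a₁) (translateSet S a₂)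

/-- Maximum packing density of `S`. -/
noncomputable def dP (S : Set ℤ) : ℝ := sSup (upperDensity '' {A | SPacking S A})

/-- Minimum covering density of `S`. -/
noncomputable def dC (S : Set ℤ) : ℝ := sInf (lowerDensity '' {A | SCovering S A})

/-- Minimum blocking density of `S`. -/
noncomputable def dB (S : Set ℤ) : ℝ := sInf (lowerDensity '' {A | SBlocking S A})

/-- `d_f(S)`: supremum of upper densities of `S`-free sets. -/
noncomputable def dF (S : Set ℤ) : ℝ := sSup (upperDensity '' {A | SFree S A})

/-- `d_f(S, -S)`: supremum of upper densities of sets free of translates of both `S` and `-S`. -/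
noncomputable def dF2 (S : Set ℤ) : ℝ := sSup (upperDensity '' {A | SFree S A ∧ SFree (-S) A})

section Aux13

lemma key13 (l1 l2 i₁ i₂ c : ℤ)
    (hcop : IsCoprime (2*l1+l2) l1)
    (hm3 : (2*l1+l2) % 3 = 1)
    (hb1 : 1 ≤ i₁) (hb2 : i₁ ≤ 2*l1+l2) (hb3 : i₁ % 3 = 0)
    (hc1 : 1 ≤ i₂) (hc2 : i₂ ≤ 2*l1+l2) (hc3 : i₂ % 3 = 0)
    (hc : c = 1 ∨ c = -1 ∨ c = 2 ∨ c = -2)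
    (hdvd : (2*l1+l2) ∣ (i₁ - i₂ + c) * l1) : False := by
  have hd : (2*l1+l2) ∣ (i₁ - i₂ + c) := hcop.dvd_of_dvd_mul_right hdvd
  have h0 : i₁ - i₂ + c = 0 := Int.eq_zero_of_abs_lt_dvd hd (by rw [abs_lt]; constructor <;> omega)
  omega

lemma cop13 (l1 l2 : ℤ) (hco : Int.gcd l1 l2 = 1) : IsCoprime (2*l1+l2) l1 := by
  have h : IsCoprime l1 l2 := Int.isCoprime_iff_gcd_eq_one.mpr hco
  rw [show (2*l1+l2) = l2 + l1*2 from by ring]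
  exact h.symm.add_mul_left_left 2

lemma Icount13 (m : ℤ) :
    {i : ℤ | 1 ≤ i ∧ i ≤ m ∧ i % 3 = 0}.ncard = (m/3).toNat := by
  have h : {i : ℤ | 1 ≤ i ∧ i ≤ m ∧ i % 3 = 0}
      = ↑(Finset.image (fun j => 3*j) (Finset.Icc 1 (m/3))) := by
    ext i
    simp only [Finset.coe_image, Finset.coe_Icc, Set.mem_image, Set.mem_Icc, Set.mem_setOf_eq]
    constructor
    · rintro ⟨ha, hb, hc⟩; exact ⟨i/3, ⟨by omega, by omega⟩, by omega⟩
    · rintro ⟨j, ⟨hj1, hj2⟩, rfl⟩; omega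
  rw [h, Set.ncard_coe_finset, Finset.card_image_of_injective _ (fun a b h => by omega),
    Int.card_Icc]
  congr 1; omega

lemma window13 (l1 l2 : ℤ) (h1 : 0 < l1) (h2 : 0 < l2)
    (hcop : IsCoprime (2*l1+l2) l1) (a : ℤ) :
    ({x : ℤ | ∃ i : ℤ, 1 ≤ i ∧ i ≤ 2*l1+l2 ∧ i % 3 = 0 ∧ (2*l1+l2) ∣ (x - i*l1)} ∩
      Set.Icc a (a + (2*l1+l2) - 1)).ncard = ((2*l1+l2)/3).toNat := by
  set m := 2*l1+l2 with hm
  have hm0 : 0 < m := by omega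
  have himg : {x : ℤ | ∃ i : ℤ, 1 ≤ i ∧ i ≤ m ∧ i % 3 = 0 ∧ m ∣ (x - i*l1)} ∩
      Set.Icc a (a + m - 1)
      = (fun i => a + (i*l1 - a) % m) '' {i : ℤ | 1 ≤ i ∧ i ≤ m ∧ i % 3 = 0} := by
    ext x
    simp only [Set.mem_inter_iff, Set.mem_setOf_eq, Set.mem_Icc, Set.mem_image]
    constructor
    · rintro ⟨⟨i, hi1, hi2, hi3, hdvd⟩, hxa, hxb⟩
      refine ⟨i, ⟨hi1, hi2, hi3⟩, ?_⟩
      have h1 : (i*l1 - a) % m = (x - a) % m := by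
        rw [Int.emod_eq_emod_iff_emod_sub_eq_zero,
          show (i*l1 - a) - (x - a) = -(x - i*l1) from by ring]
        exact Int.emod_eq_zero_of_dvd (dvd_neg.mpr hdvd)
      rw [h1, Int.emod_eq_of_lt (by omega) (by omega)]
      omega
    · rintro ⟨i, ⟨hi1, hi2, hi3⟩, rfl⟩
      have hmod1 := Int.emod_nonneg (i*l1 - a) (by omega : m ≠ 0)
      have hmod2 := Int.emod_lt_of_pos (i*l1 - a) hm0
      refine ⟨⟨i, hi1, hi2, hi3, ?_⟩, by omega, by omega⟩
      have hdm := Int.emod_add_mul_ediv (i*l1 - a) m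
      exact ⟨-((i*l1 - a)/m), by linarith [hdm]⟩
  have hinj : Set.InjOn (fun i => a + (i*l1 - a) % m) {i : ℤ | 1 ≤ i ∧ i ≤ m ∧ i % 3 = 0} := by
    rintro i₁ ⟨hi1, hi2, hi3⟩ i₂ ⟨hj1, hj2, hj3⟩ heq
    simp only at heq
    have h1 : (i₁*l1 - a) % m = (i₂*l1 - a) % m := by omega
    rw [Int.emod_eq_emod_iff_emod_sub_eq_zero] at h1
    have h2 : m ∣ (i₁ - i₂) * l1 := by
      have := Int.dvd_of_emod_eq_zero h1
      rwa [show (i₁*l1 - a) - (i₂*l1 - a) = (i₁ - i₂)*l1 from by ring] at this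
    have h3 : m ∣ (i₁ - i₂) := hcop.dvd_of_dvd_mul_right h2
    have h4 : i₁ - i₂ = 0 := Int.eq_zero_of_abs_lt_dvd h3 (by rw [abs_lt]; omega)
    omega
  rw [himg, Set.ncard_image_of_injOn hinj, Icount13]

lemma multiwindow13 (l1 l2 : ℤ) (h1 : 0 < l1) (h2 : 0 < l2)
    (hcop : IsCoprime (2*l1+l2) l1) (a : ℤ) : ∀ t : ℕ,
    ({x : ℤ | ∃ i : ℤ, 1 ≤ i ∧ i ≤ 2*l1+l2 ∧ i % 3 = 0 ∧ (2*l1+l2) ∣ (x - i*l1)} ∩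
      Set.Icc a (a + (2*l1+l2) * t - 1)).ncard = ((2*l1+l2)/3).toNat * t := by
  set m := 2*l1+l2 with hm
  set A := {x : ℤ | ∃ i : ℤ, 1 ≤ i ∧ i ≤ m ∧ i % 3 = 0 ∧ m ∣ (x - i*l1)} with hA
  have hm0 : 0 < m := by omega
  intro t
  induction t with
  | zero =>
    have : Set.Icc a (a + m * (0:ℕ) - 1) = ∅ := by
      apply Set.Icc_eq_empty; push_cast; omega
    simp [this]
  | succ t ih =>
    have hc : a ≤ a + m * t := by
      have : 0 ≤ m * (t:ℤ) := mul_nonneg (by omega) (by positivity)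
      omega
    set c := a + m * (t:ℤ) with hcdef
    have hsplit : Set.Icc a (a + m * ((t:ℕ)+1:ℕ) - 1) = Set.Icc a (c - 1) ∪ Set.Icc c (c + m - 1) := by
      have he : a + m * ((t:ℕ)+1:ℕ) - 1 = c + m - 1 := by push_cast; ring
      rw [he]
      ext x
      simp only [Set.mem_Icc, Set.mem_union]
      omega
    rw [hsplit, Set.inter_union_distrib_left,
      Set.ncard_union_eq (by
          rw [Set.disjoint_left]
          rintro x ⟨-, hx1⟩ ⟨-, hx2⟩
          simp only [Set.mem_Icc] at hx1 hx2
          omega)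
        ((Set.finite_Icc _ _).inter_of_right _) ((Set.finite_Icc _ _).inter_of_right _),
      ih, window13 l1 l2 h1 h2 hcop c]
    ring

lemma bounds13 (l1 l2 : ℤ) (h1 : 0 < l1) (h2 : 0 < l2)
    (hcop : IsCoprime (2*l1+l2) l1) (n : ℕ) :
    (((2*l1+l2)/3).toNat * ((2*(n:ℤ)+1)/(2*l1+l2)).toNat : ℕ) ≤
      ({x : ℤ | ∃ i : ℤ, 1 ≤ i ∧ i ≤ 2*l1+l2 ∧ i % 3 = 0 ∧ (2*l1+l2) ∣ (x - i*l1)} ∩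
        Set.Icc (-(n:ℤ)) (n:ℤ)).ncard ∧
    ({x : ℤ | ∃ i : ℤ, 1 ≤ i ∧ i ≤ 2*l1+l2 ∧ i % 3 = 0 ∧ (2*l1+l2) ∣ (x - i*l1)} ∩
        Set.Icc (-(n:ℤ)) (n:ℤ)).ncard ≤
      (((2*l1+l2)/3).toNat * (((2*(n:ℤ)+1)/(2*l1+l2)).toNat + 1) : ℕ) := by
  set m := 2*l1+l2 with hm
  set A := {x : ℤ | ∃ i : ℤ, 1 ≤ i ∧ i ≤ m ∧ i % 3 = 0 ∧ m ∣ (x - i*l1)} with hA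
  have hm0 : 0 < m := by omega
  set T : ℤ := (2*(n:ℤ)+1)/m with hT
  have hT0 : 0 ≤ T := Int.ediv_nonneg (by omega) (by omega)
  have hde := Int.mul_ediv_add_emod (2*(n:ℤ)+1) m
  have hr1 := Int.emod_nonneg (2*(n:ℤ)+1) (by omega : m ≠ 0)
  have hr2 := Int.emod_lt_of_pos (2*(n:ℤ)+1) hm0
  set M : ℤ := m * T with hM
  have hM1 : M ≤ 2*(n:ℤ)+1 := by omega
  have hM2 : 2*(n:ℤ)+1 < M + m := by omega
  have hcast : (T.toNat : ℤ) = T := Int.toNat_of_nonneg hT0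
  constructor
  · have := multiwindow13 l1 l2 h1 h2 hcop (-(n:ℤ)) T.toNat
    rw [hcast, ← hm] at this
    rw [← this]
    apply Set.ncard_le_ncard _ ((Set.finite_Icc _ _).inter_of_right _)
    apply Set.inter_subset_inter_right
    intro x hx
    simp only [Set.mem_Icc] at hx ⊢
    omega
  · have := multiwindow13 l1 l2 h1 h2 hcop (-(n:ℤ)) (T.toNat + 1)
    rw [show ((T.toNat + 1 : ℕ) : ℤ) = T + 1 from by omega, ← hm] at this
    rw [← this]
    apply Set.ncard_le_ncard _ ((Set.finite_Icc _ _).inter_of_right _)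
    apply Set.inter_subset_inter_right
    intro x hx
    simp only [Set.mem_Icc] at hx ⊢
    have : m * (T + 1) = M + m := by ring
    omega

lemma tendsto_ratio13 (q m : ℤ) (hq : 0 ≤ q) (hm : 0 < m) (f : ℕ → ℕ)
    (hlow : ∀ n : ℕ, q * (2*(n:ℤ)+1) - q*m ≤ m * (f n : ℤ))
    (hhigh : ∀ n : ℕ, m * (f n : ℤ) ≤ q * (2*(n:ℤ)+1) + q*m) :
    Tendsto (fun n : ℕ => (f n : ℝ) / (2*(n:ℝ)+1)) atTop (nhds ((q:ℝ)/(m:ℝ))) := by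
  have hmr : (0:ℝ) < (m:ℝ) := by exact_mod_cast hm
  have hqr : (0:ℝ) ≤ (q:ℝ) := by exact_mod_cast hq
  have hg : Tendsto (fun n : ℕ => (q*m : ℝ) / ((m:ℝ)*(2*(n:ℝ)+1))) atTop (nhds 0) := by
    apply Tendsto.div_atTop tendsto_const_nhds
    apply Filter.Tendsto.const_mul_atTop hmr
    apply tendsto_atTop_add_const_right
    apply Tendsto.const_mul_atTop (by norm_num : (0:ℝ) < 2)
    exact tendsto_natCast_atTop_atTop
  have hdiff : Tendsto (fun n : ℕ => (f n : ℝ) / (2*(n:ℝ)+1) - (q:ℝ)/(m:ℝ)) atTop (nhds 0) := by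
    apply squeeze_zero_norm _ hg
    intro n
    have h2n : (0:ℝ) < 2*(n:ℝ)+1 := by positivity
    have hkey : (f n : ℝ) / (2*(n:ℝ)+1) - (q:ℝ)/(m:ℝ)
        = ((m:ℝ)*(f n : ℝ) - (q:ℝ)*(2*(n:ℝ)+1)) / ((m:ℝ)*(2*(n:ℝ)+1)) := by
      field_simp
    rw [hkey, Real.norm_eq_abs, abs_div, abs_of_pos (mul_pos hmr h2n)]
    rw [div_le_div_iff_of_pos_right (mul_pos hmr h2n)]
    rw [abs_le]
    constructor
    · have h : (q:ℝ) * (2*(n:ℝ)+1) - (q:ℝ)*(m:ℝ) ≤ (m:ℝ) * (f n : ℝ) := by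
        exact_mod_cast hlow n
      linarith
    · have h : (m:ℝ) * (f n : ℝ) ≤ (q:ℝ) * (2*(n:ℝ)+1) + (q:ℝ)*(m:ℝ) := by
        exact_mod_cast hhigh n
      linarith
  have := hdiff.add_const ((q:ℝ)/(m:ℝ))
  simpa using this

lemma floor13 (m : ℤ) (hm : 0 < m) : ⌊(1:ℝ)/3 * (m:ℝ)⌋ = m / 3 := by
  have h := Int.mul_ediv_add_emod m 3
  have hr1 := Int.emod_nonneg m (by norm_num : (3:ℤ) ≠ 0)
  have hr2 := Int.emod_lt_of_pos m (by norm_num : (0:ℤ) < 3)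
  rw [Int.floor_eq_iff]
  constructor
  · have : ((3 * (m/3) : ℤ) : ℝ) ≤ (m:ℝ) := by exact_mod_cast by omega
    push_cast at this ⊢
    linarith
  · have : ((m:ℤ) : ℝ) < ((3 * (m/3) + 3 : ℤ) : ℝ) := by exact_mod_cast by omega
    push_cast at this ⊢
    linarith

lemma ud_le_one13 (B : Set ℤ) : upperDensity B ≤ 1 := by
  have hb : ∀ n : ℕ, ((B ∩ Set.Icc (-(n:ℤ)) (n:ℤ)).ncard : ℝ) / (2 * (n:ℝ) + 1) ≤ 1 := by
    intro n
    rw [div_le_one (by positivity)]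
    have h1 : (B ∩ Set.Icc (-(n:ℤ)) n).ncard ≤ (Set.Icc (-(n:ℤ)) (n:ℤ)).ncard :=
      Set.ncard_le_ncard Set.inter_subset_right (Set.finite_Icc _ _)
    have h2 : (Set.Icc (-(n:ℤ)) (n:ℤ)).ncard = 2*n+1 := by
      rw [← Finset.coe_Icc, Set.ncard_coe_finset, Int.card_Icc]; omega
    calc ((B ∩ Set.Icc (-(n:ℤ)) n).ncard : ℝ) ≤ ((2*n+1 : ℕ):ℝ) := by
          exact_mod_cast h2 ▸ h1
    _ = 2*(n:ℝ)+1 := by push_cast; ring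
  exact Filter.limsup_le_of_le
    (Filter.isCoboundedUnder_le_of_le atTop (x := 0) (fun n => by positivity))
    (Filter.Eventually.of_forall hb)

end Aux13

theorem stmt13 (l1 l2 : ℤ) (h1 : 0 < l1) (h2 : 0 < l2) (hco : Int.gcd l1 l2 = 1)
    (hmod : l1 % 3 = (l2 - 1) % 3) :
    SPacking ({0, l1, l1 + l2} : Set ℤ)
      {x : ℤ | ∃ i : ℤ, 1 ≤ i ∧ i ≤ 2 * l1 + l2 ∧ i % 3 = 0 ∧ (2 * l1 + l2) ∣ (x - i * l1)} ∧
    upperDensity {x : ℤ | ∃ i : ℤ, 1 ≤ i ∧ i ≤ 2 * l1 + l2 ∧ i % 3 = 0 ∧ (2 * l1 + l2) ∣ (x - i * l1)} =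
      (⌊(1 : ℝ) / 3 * (2 * l1 + l2)⌋ : ℝ) / (2 * l1 + l2) ∧
    lowerDensity {x : ℤ | ∃ i : ℤ, 1 ≤ i ∧ i ≤ 2 * l1 + l2 ∧ i % 3 = 0 ∧ (2 * l1 + l2) ∣ (x - i * l1)} =
      (⌊(1 : ℝ) / 3 * (2 * l1 + l2)⌋ : ℝ) / (2 * l1 + l2) ∧
    dP ({0, l1, l1 + l2} : Set ℤ) ≥ (⌊(1 : ℝ) / 3 * (2 * l1 + l2)⌋ : ℝ) / (2 * l1 + l2) := by
  have hcop : IsCoprime (2*l1+l2) l1 := cop13 l1 l2 hco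
  have hm3 : (2*l1+l2) % 3 = 1 := by omega
  have hm0 : (0:ℤ) < 2*l1+l2 := by omega
  set A := {x : ℤ | ∃ i : ℤ, 1 ≤ i ∧ i ≤ 2 * l1 + l2 ∧ i % 3 = 0 ∧ (2 * l1 + l2) ∣ (x - i * l1)}
    with hA
  -- Packing
  have hpack : SPacking ({0, l1, l1 + l2} : Set ℤ) A := by
    rintro a₁ ha₁ a₂ ha₂ hne
    obtain ⟨i₁, hb1, hb2, hb3, k₁, hk₁⟩ := ha₁
    obtain ⟨i₂, hc1, hc2, hc3, k₂, hk₂⟩ := ha₂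
    rw [Set.disjoint_left]
    rintro x ⟨s₁, hs₁, rfl⟩ ⟨s₂, hs₂, heq⟩
    simp only [Set.mem_insert_iff, Set.mem_singleton_iff] at hs₁ hs₂
    simp only at heq
    rcases hs₁ with hs₁ | hs₁ | hs₁ <;> rcases hs₂ with hs₂ | hs₂ | hs₂ <;>
      rw [hs₁, hs₂] at heq
    · exact hne (by omega)
    · exact key13 l1 l2 i₁ i₂ (-1) hcop hm3 hb1 hb2 hb3 hc1 hc2 hc3 (by norm_num)
        ⟨k₂ - k₁, by linear_combination hk₂ - hk₁ - heq⟩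
    · exact key13 l1 l2 i₁ i₂ 1 hcop hm3 hb1 hb2 hb3 hc1 hc2 hc3 (by norm_num)
        ⟨k₂ - k₁ + 1, by linear_combination hk₂ - hk₁ - heq⟩
    · exact key13 l1 l2 i₁ i₂ 1 hcop hm3 hb1 hb2 hb3 hc1 hc2 hc3 (by norm_num)
        ⟨k₂ - k₁, by linear_combination hk₂ - hk₁ - heq⟩
    · exact hne (by omega)
    · exact key13 l1 l2 i₁ i₂ 2 hcop hm3 hb1 hb2 hb3 hc1 hc2 hc3 (by norm_num)
        ⟨k₂ - k₁ + 1, by linear_combination hk₂ - hk₁ - heq⟩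
    · exact key13 l1 l2 i₁ i₂ (-1) hcop hm3 hb1 hb2 hb3 hc1 hc2 hc3 (by norm_num)
        ⟨k₂ - k₁ - 1, by linear_combination hk₂ - hk₁ - heq⟩
    · exact key13 l1 l2 i₁ i₂ (-2) hcop hm3 hb1 hb2 hb3 hc1 hc2 hc3 (by norm_num)
        ⟨k₂ - k₁ - 1, by linear_combination hk₂ - hk₁ - heq⟩
    · exact hne (by omega)
  -- The limit
  set q : ℤ := (2*l1+l2)/3 with hq
  have hq0 : 0 ≤ q := Int.ediv_nonneg (by omega) (by norm_num)
  have htend : Tendsto (fun n : ℕ => ((A ∩ Set.Icc (-(n:ℤ)) (n:ℤ)).ncard : ℝ) / (2*(n:ℝ)+1))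
      atTop (nhds ((q:ℝ)/((2*l1+l2 : ℤ):ℝ))) := by
    apply tendsto_ratio13 q (2*l1+l2) hq0 hm0
    all_goals intro n
    · obtain ⟨hL, -⟩ := bounds13 l1 l2 h1 h2 hcop n
      set T : ℤ := (2*(n:ℤ)+1)/(2*l1+l2) with hT
      have hT0 : 0 ≤ T := Int.ediv_nonneg (by omega) (by omega)
      have hde := Int.mul_ediv_add_emod (2*(n:ℤ)+1) (2*l1+l2)
      have hr1 := Int.emod_nonneg (2*(n:ℤ)+1) (by omega : (2*l1+l2) ≠ 0)
      have hr2 := Int.emod_lt_of_pos (2*(n:ℤ)+1) hm0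
      have hLZ : q * T ≤ ((A ∩ Set.Icc (-(n:ℤ)) (n:ℤ)).ncard : ℤ) := by
        have := (Nat.cast_le (α := ℤ)).mpr hL
        push_cast at this
        rwa [Int.toNat_of_nonneg hq0, Int.toNat_of_nonneg hT0] at this
      have hmul : (2*l1+l2) * (q * T) ≤ (2*l1+l2) * ((A ∩ Set.Icc (-(n:ℤ)) (n:ℤ)).ncard : ℤ) :=
        mul_le_mul_of_nonneg_left hLZ (by omega)
      nlinarith [mul_nonneg hq0 (by omega : 0 ≤ (2*l1+l2) - ((2*(n:ℤ)+1) % (2*l1+l2))),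
        mul_nonneg hq0 hr1]
    · obtain ⟨-, hU⟩ := bounds13 l1 l2 h1 h2 hcop n
      set T : ℤ := (2*(n:ℤ)+1)/(2*l1+l2) with hT
      have hT0 : 0 ≤ T := Int.ediv_nonneg (by omega) (by omega)
      have hde := Int.mul_ediv_add_emod (2*(n:ℤ)+1) (2*l1+l2)
      have hr1 := Int.emod_nonneg (2*(n:ℤ)+1) (by omega : (2*l1+l2) ≠ 0)
      have hr2 := Int.emod_lt_of_pos (2*(n:ℤ)+1) hm0
      have hUZ : ((A ∩ Set.Icc (-(n:ℤ)) (n:ℤ)).ncard : ℤ) ≤ q * (T + 1) := by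
        have := (Nat.cast_le (α := ℤ)).mpr hU
        push_cast at this
        rwa [Int.toNat_of_nonneg hq0, Int.toNat_of_nonneg hT0] at this
      have hmul : (2*l1+l2) * ((A ∩ Set.Icc (-(n:ℤ)) (n:ℤ)).ncard : ℤ) ≤ (2*l1+l2) * (q * (T+1)) :=
        mul_le_mul_of_nonneg_left hUZ (by omega)
      nlinarith [mul_nonneg hq0 hr1]
  have hval : ((q:ℤ):ℝ)/((2*l1+l2 : ℤ):ℝ) = (⌊(1 : ℝ) / 3 * (2 * (l1:ℝ) + (l2:ℝ))⌋ : ℝ) / (2 * (l1:ℝ) + (l2:ℝ)) := by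
    rw [show (1 : ℝ) / 3 * (2 * (l1:ℝ) + (l2:ℝ)) = (1:ℝ)/3 * (((2*l1+l2 : ℤ)):ℝ) from by
      push_cast; ring, floor13 (2*l1+l2) hm0]
    rw [hq]
    push_cast
    ring
  have hud : upperDensity A = (⌊(1 : ℝ) / 3 * (2 * (l1:ℝ) + (l2:ℝ))⌋ : ℝ) / (2 * (l1:ℝ) + (l2:ℝ)) := by
    rw [← hval]
    exact htend.limsup_eq
  have hld : lowerDensity A = (⌊(1 : ℝ) / 3 * (2 * (l1:ℝ) + (l2:ℝ))⌋ : ℝ) / (2 * (l1:ℝ) + (l2:ℝ)) := by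
    rw [← hval]
    exact htend.liminf_eq
  refine ⟨hpack, hud, hld, ?_⟩
  rw [← hud]
  apply le_csSup
  · exact ⟨1, by rintro y ⟨B, -, rfl⟩; exact ud_le_one13 B⟩
  · exact ⟨A, hpack, rfl⟩
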